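/- Let B and B' be strict bicategories equipped with Lawvere 2-weights (W₁, W₂) and (W₁', W₂') respectively, with associated interleaving distances d and d'. Let F be a pseudofunctor from B to B' such that: W₁'(F(f)) ≤ W₁(f) for every 1-morphism f of B; W₂'(F(η)) ≤ W₂(η) for every 2-morphism η of B; and the 2-weights of the structural 2-cells of F are all zero, i.e. W₂' of the components (and of the inverse components) of the isomorphisms F(𝟙_a) ≅ 𝟙_{F(a)} and F(f ≫ g) ≅ F(f) ≫ F(g) all vanish. Then for all objects a, b of B: d'(F(a), F(b)) ≤ d(a, b). -/
import Mathlib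


open CategoryTheory
open scoped ENNReal Bicategory

section Defs

variable {B : Type*} [Bicategory B]

/-- The set of candidate interleaving costs between two objects of a (strict) bicategory
equipped with a Lawvere 2-weight `(W₁, W₂)`. -/
def interleavingCosts (W₁ : ∀ {a b : B}, (a ⟶ b) → ℝ≥0∞)
    (W₂ : ∀ {a b : B} {f g : a ⟶ b}, (f ⟶ g) → ℝ≥0∞) (a b : B) : Set ℝ≥0∞ :=
  {e | ∃ (g : a ⟶ b) (h : b ⟶ a) (α : 𝟙 a ⟶ g ≫ h) (β : 𝟙 b ⟶ h ≫ g),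
    e = max (max (W₁ g) (W₁ h)) (max (W₂ α) (W₂ β))}

/-- The interleaving distance on the objects of a (strict) bicategory equipped with a
Lawvere 2-weight. -/
noncomputable def interleavingDist (W₁ : ∀ {a b : B}, (a ⟶ b) → ℝ≥0∞)
    (W₂ : ∀ {a b : B} {f g : a ⟶ b}, (f ⟶ g) → ℝ≥0∞) (a b : B) : ℝ≥0∞ :=
  sInf (interleavingCosts W₁ W₂ a b)

end Defs

/-- **stability.** A pseudofunctor between strict bicategories with Lawvere
2-weights which does not increase the weights of 1- and 2-morphisms, and whose structural
2-cells all have 2-weight zero, is 1-Lipschitz for the induced interleaving distances. -/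
theorem stmt_11 {B : Type*} [Bicategory B] [Bicategory.Strict B]
    {B' : Type*} [Bicategory B'] [Bicategory.Strict B']
    (W₁ : ∀ {a b : B}, (a ⟶ b) → ℝ≥0∞)
    (W₂ : ∀ {a b : B} {f g : a ⟶ b}, (f ⟶ g) → ℝ≥0∞)
    (W₁' : ∀ {a b : B'}, (a ⟶ b) → ℝ≥0∞)
    (W₂' : ∀ {a b : B'} {f g : a ⟶ b}, (f ⟶ g) → ℝ≥0∞)
    -- `(W₁, W₂)` is a Lawvere 2-weight on `B`
    (hW₁_id : ∀ a : B, W₁ (𝟙 a) = 0)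
    (hW₁_comp : ∀ {a b c : B} (f : a ⟶ b) (g : b ⟶ c), W₁ (f ≫ g) ≤ W₁ f + W₁ g)
    (hW₂_id : ∀ {a b : B} (f : a ⟶ b), W₂ (𝟙 f) = 0)
    (hW₂_vcomp : ∀ {a b : B} {f g h : a ⟶ b} (η : f ⟶ g) (θ : g ⟶ h),
      W₂ (η ≫ θ) ≤ W₂ η + W₂ θ)
    (hW₂_hcomp : ∀ {a b c : B} {f g : a ⟶ b} {h k : b ⟶ c} (η : f ⟶ g) (θ : h ⟶ k),
      W₂ ((η ▷ h) ≫ (g ◁ θ)) ≤ W₂ η + W₂ θ)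
    -- `(W₁', W₂')` is a Lawvere 2-weight on `B'`
    (hW₁'_id : ∀ a : B', W₁' (𝟙 a) = 0)
    (hW₁'_comp : ∀ {a b c : B'} (f : a ⟶ b) (g : b ⟶ c), W₁' (f ≫ g) ≤ W₁' f + W₁' g)
    (hW₂'_id : ∀ {a b : B'} (f : a ⟶ b), W₂' (𝟙 f) = 0)
    (hW₂'_vcomp : ∀ {a b : B'} {f g h : a ⟶ b} (η : f ⟶ g) (θ : g ⟶ h),
      W₂' (η ≫ θ) ≤ W₂' η + W₂' θ)
    (hW₂'_hcomp : ∀ {a b c : B'} {f g : a ⟶ b} {h k : b ⟶ c} (η : f ⟶ g) (θ : h ⟶ k),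
      W₂' ((η ▷ h) ≫ (g ◁ θ)) ≤ W₂' η + W₂' θ)
    -- a weight non-increasing pseudofunctor whose structural 2-cells have weight zero
    (F : Pseudofunctor B B')
    (hF₁ : ∀ {a b : B} (f : a ⟶ b), W₁' (F.map f) ≤ W₁ f)
    (hF₂ : ∀ {a b : B} {f g : a ⟶ b} (η : f ⟶ g), W₂' (F.map₂ η) ≤ W₂ η)
    (hFid_hom : ∀ a : B, W₂' (F.mapId a).hom = 0)
    (hFid_inv : ∀ a : B, W₂' (F.mapId a).inv = 0)
    (hFcomp_hom : ∀ {a b c : B} (f : a ⟶ b) (g : b ⟶ c), W₂' (F.mapComp f g).hom = 0)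
    (hFcomp_inv : ∀ {a b c : B} (f : a ⟶ b) (g : b ⟶ c), W₂' (F.mapComp f g).inv = 0) :
    ∀ a b : B, interleavingDist W₁' W₂' (F.obj a) (F.obj b) ≤ interleavingDist W₁ W₂ a b := by
  intro a b
  refine le_sInf fun e he => ?_
  obtain ⟨g, h, α, β, rfl⟩ := he
  set α' : 𝟙 (F.obj a) ⟶ F.map g ≫ F.map h :=
    (F.mapId a).inv ≫ F.map₂ α ≫ (F.mapComp g h).hom with hα'
  set β' : 𝟙 (F.obj b) ⟶ F.map h ≫ F.map g :=
    (F.mapId b).inv ≫ F.map₂ β ≫ (F.mapComp h g).hom with hβ'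
  have hα'w : W₂' α' ≤ W₂ α := by
    calc W₂' α' ≤ W₂' (F.mapId a).inv + W₂' (F.map₂ α ≫ (F.mapComp g h).hom) :=
          hW₂'_vcomp _ _
      _ ≤ 0 + (W₂' (F.map₂ α) + W₂' (F.mapComp g h).hom) := by
          gcongr
          · exact (hFid_inv a).le
          · exact hW₂'_vcomp _ _
      _ ≤ 0 + (W₂ α + 0) := by
          gcongr
          · exact hF₂ α
          · exact (hFcomp_hom g h).le
      _ = W₂ α := by simp
  have hβ'w : W₂' β' ≤ W₂ β := by
    calc W₂' β' ≤ W₂' (F.mapId b).inv + W₂' (F.map₂ β ≫ (F.mapComp h g).hom) :=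
          hW₂'_vcomp _ _
      _ ≤ 0 + (W₂' (F.map₂ β) + W₂' (F.mapComp h g).hom) := by
          gcongr
          · exact (hFid_inv b).le
          · exact hW₂'_vcomp _ _
      _ ≤ 0 + (W₂ β + 0) := by
          gcongr
          · exact hF₂ β
          · exact (hFcomp_hom h g).le
      _ = W₂ β := by simp
  refine sInf_le_of_le ⟨F.map g, F.map h, α', β', rfl⟩ ?_
  exact max_le_max (max_le_max (hF₁ g) (hF₁ h)) (max_le_max hα'w hβ'w)
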